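/- Let P be a finite planar point set satisfying Property Δ₂, let T ⊆ 𝒜 be a skewering tree for P, and let ℓ, ℓ₁, ℓ₂ be distinct lines in T with ℓ a leaf and ℓ₁ skewering ℓ₂. Then the line ℓ does not intersect the convex hull of the four endpoints of ℓ₁ and ℓ₂. -/

import Mathlib

open scoped Classical

noncomputable section

/-- No three distinct points of `P` are collinear. -/
def GenPos (P : Finset ℂ) : Prop :=
  ∀ x ∈ P, ∀ y ∈ P, ∀ z ∈ P, x ≠ y → x ≠ z → y ≠ z → ¬ Collinear ℝ ({x, y, z} : Set ℂ)

/-- `A` is a convex subset of `P`: `A ⊆ P` and no point of `A` lies in the interior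
of the convex hull of `A`. -/
def ConvexSubset (P A : Finset ℂ) : Prop :=
  A ⊆ P ∧ ∀ a ∈ A, a ∉ interior (convexHull ℝ (A : Set ℂ))

/-- Points of `P` in the interior of the convex hull of `A`. -/
def intPts (P A : Finset ℂ) : Finset ℂ :=
  P.filter (fun x => x ∈ interior (convexHull ℝ (A : Set ℂ)))

/-- Property `Δ_k`: every convex subset `A ⊆ P` has at most `|A| + k - 3` points of `P`
in the interior of its convex hull. -/
def PropertyDelta (P : Finset ℂ) (k : ℕ) : Prop :=
  ∀ A : Finset ℂ, ConvexSubset P A →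
    ((intPts P A).card : ℤ) ≤ (A.card : ℤ) + (k : ℤ) - 3

/-- A point is internal for `P` if it lies in the interior of the convex hull of `P`. -/
def Internal (P : Finset ℂ) (x : ℂ) : Prop :=
  x ∈ interior (convexHull ℝ (P : Set ℂ))

/-- A point of `P` is extremal if it lies on the boundary of the convex hull of `P`. -/
def Extremal (P : Finset ℂ) (x : ℂ) : Prop :=
  x ∈ P ∧ ¬ Internal P x

/-- The line through two points, as a subset of the plane. -/
def lineThrough (u v : ℂ) : Set ℂ :=
  ↑(affineSpan ℝ ({u, v} : Set ℂ))

/-- Signed area test: the side of the line through `a, b` on which `x` lies. -/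
def cross2 (a b x : ℂ) : ℝ :=
  (b.re - a.re) * (x.im - a.im) - (b.im - a.im) * (x.re - a.re)

/-- The line through `w₁, w₂` is non-separating: all internal points of `P` lie
(weakly) on one side of it. -/
def NonSeparating (P : Finset ℂ) (w₁ w₂ : ℂ) : Prop :=
  (∀ x ∈ P, Internal P x → 0 ≤ cross2 w₁ w₂ x) ∨
  (∀ x ∈ P, Internal P x → cross2 w₁ w₂ x ≤ 0)

/-- A move of configurations: `z ∈ P` is replaced by a point `z'` lying in the interior of
a region of the complement of the arrangement `𝒜^z` (lines through pairs of points of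
`P - {z}`) adjacent to the region of `z`, the two regions being separated by the line `ℓ`
through `w₁, w₂ ∈ P`: the segment from `z` to `z'` crosses `ℓ` and no other line of `𝒜^z`. -/
def MoveAcross (P : Finset ℂ) (z z' w₁ w₂ : ℂ) : Prop :=
  z ∈ P ∧ w₁ ∈ P ∧ w₂ ∈ P ∧ w₁ ≠ w₂ ∧ z ≠ w₁ ∧ z ≠ w₂ ∧ z' ∉ P ∧
  z ∉ lineThrough w₁ w₂ ∧ z' ∉ lineThrough w₁ w₂ ∧
  (∃ p ∈ segment ℝ z z', p ∈ lineThrough w₁ w₂) ∧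
  (∀ u ∈ P, ∀ v ∈ P, u ≠ v → u ≠ z → v ≠ z → ({u, v} : Set ℂ) ≠ ({w₁, w₂} : Set ℂ) →
    ∀ p ∈ segment ℝ z z', p ∉ lineThrough u v)

/-- The configuration resulting from a move. -/
def movedConfig (P : Finset ℂ) (z z' : ℂ) : Finset ℂ :=
  insert z' (P.erase z)

/-- A `Δ_k`-move between configurations. -/
def DeltaMove (k : ℕ) (P Q : Finset ℂ) : Prop :=
  PropertyDelta P k ∧ PropertyDelta Q k ∧
  ∃ z z' w₁ w₂, MoveAcross P z z' w₁ w₂ ∧ Q = movedConfig P z z'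

/-- Every point of `P` lies on the boundary of the convex hull of `P`. -/
def ConvexPosition (P : Finset ℂ) : Prop :=
  ∀ x ∈ P, ¬ Internal P x

/-- A line of the arrangement `𝒜`: determined by two distinct points of `P`. -/
structure PLine (P : Finset ℂ) where
  a : ℂ
  b : ℂ
  ha : a ∈ P
  hb : b ∈ P
  hab : a ≠ b

/-- The line itself, as a subset of the plane. -/
def PLine.carrier {P : Finset ℂ} (ℓ : PLine P) : Set ℂ := lineThrough ℓ.a ℓ.b

/-- The core of a line: the segment between its two endpoints. -/
def PLine.core {P : Finset ℂ} (ℓ : PLine P) : Set ℂ := segment ℝ ℓ.a ℓ.b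

/-- The endpoints of a line. -/
def PLine.ends {P : Finset ℂ} (ℓ : PLine P) : Set ℂ := {ℓ.a, ℓ.b}

/-- `ℓ₁` skewers `ℓ₂`: the two (distinct) lines meet in a point lying in the core of
`ℓ₂` but not in the core of `ℓ₁`. -/
def Skewers {P : Finset ℂ} (ℓ₁ ℓ₂ : PLine P) : Prop :=
  ℓ₁.carrier ≠ ℓ₂.carrier ∧
  ∃ p, p ∈ ℓ₁.carrier ∧ p ∈ ℓ₂.carrier ∧ p ∈ ℓ₂.core ∧ p ∉ ℓ₁.core

/-- Two distinct lines intersect internally if their cores meet. -/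
def IntersectInternally {P : Finset ℂ} (ℓ₁ ℓ₂ : PLine P) : Prop :=
  ℓ₁.carrier ≠ ℓ₂.carrier ∧ ∃ p, p ∈ ℓ₁.core ∧ p ∈ ℓ₂.core

/-- `x` is the link vertex of the skewer `ℓ₁ ⊣ ℓ₂`: the endpoint of `ℓ₁` lying in the
interior of the convex hull of the four endpoints. -/
def IsLinkVertex {P : Finset ℂ} (x : ℂ) (ℓ₁ ℓ₂ : PLine P) : Prop :=
  x ∈ ℓ₁.ends ∧ x ∈ interior (convexHull ℝ ({ℓ₁.a, ℓ₁.b, ℓ₂.a, ℓ₂.b} : Set ℂ))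

/-- A skewering tree: a finite set of lines of the arrangement with a designated
initial line `init` and a chosen positive side of the initial line (the side of the
point `pos`), such that no two of its lines intersect internally, every non-initial
line is skewered by a unique line of the tree, and no point of the plane is the link
vertex of more than one skewer. -/
structure SkewTree (P : Finset ℂ) where
  lines : Set (PLine P)
  finite : lines.Finite
  init : PLine P
  init_mem : init ∈ lines
  pos : ℂ
  pos_not_mem : pos ∉ init.carrier
  carrier_inj : ∀ ℓ₁ ∈ lines, ∀ ℓ₂ ∈ lines, ℓ₁.carrier = ℓ₂.carrier → ℓ₁ = ℓ₂
  no_internal : ∀ ℓ₁ ∈ lines, ∀ ℓ₂ ∈ lines, ℓ₁ ≠ ℓ₂ → ¬ IntersectInternally ℓ₁ ℓ₂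
  skewered : ∀ ℓ ∈ lines, ℓ ≠ init → ∃! ℓ', ℓ' ∈ lines ∧ Skewers ℓ' ℓ
  link_unique : ∀ x : ℂ, ∀ ℓ₁ ∈ lines, ∀ ℓ₂ ∈ lines, ∀ ℓ₁' ∈ lines, ∀ ℓ₂' ∈ lines,
    Skewers ℓ₁ ℓ₂ → Skewers ℓ₁' ℓ₂' → IsLinkVertex x ℓ₁ ℓ₂ → IsLinkVertex x ℓ₁' ℓ₂' →
    ℓ₁ = ℓ₁' ∧ ℓ₂ = ℓ₂'

/-- A leaf of a skewering tree: a non-initial line which skewers no line of the tree. -/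
def SkewTree.IsLeaf {P : Finset ℂ} (T : SkewTree P) (ℓ : PLine P) : Prop :=
  ℓ ∈ T.lines ∧ ℓ ≠ T.init ∧ ∀ ℓ' ∈ T.lines, ¬ Skewers ℓ ℓ'

/-- The vertices of the planar realization lying on the line `ℓ`: intersections of `ℓ`
with the other lines of the tree. -/
def SkewTree.verts {P : Finset ℂ} (T : SkewTree P) (ℓ : PLine P) : Set ℂ :=
  {p | p ∈ ℓ.carrier ∧ ∃ ℓ' ∈ T.lines, ℓ'.carrier ≠ ℓ.carrier ∧ p ∈ ℓ'.carrier}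

/-- The part of the line `ℓ` kept in the planar realization `Γ_T`: the whole line minus
the open rays (unbounded components of the vertex-punctured line) not containing the
core of `ℓ`. -/
def SkewTree.realization {P : Finset ℂ} (T : SkewTree P) (ℓ : PLine P) : Set ℂ :=
  {p | p ∈ ℓ.carrier ∧
    ¬ (p ∉ T.verts ℓ ∧
       (∀ x ∈ ℓ.core, ∃ v ∈ T.verts ℓ, v ∈ openSegment ℝ x p) ∧
       ¬ ∃ v ∈ T.verts ℓ, ∃ w ∈ T.verts ℓ, p ∈ openSegment ℝ v w)}

/-- The planar realization `Γ_T` of the skewering tree. -/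
def SkewTree.graph {P : Finset ℂ} (T : SkewTree P) : Set ℂ :=
  ⋃ ℓ ∈ T.lines, T.realization ℓ

/-- A region of the complement of the planar realization `Γ_T`. -/
def SkewTree.IsRegion {P : Finset ℂ} (T : SkewTree P) (R : Set ℂ) : Prop :=
  ∃ x, x ∉ T.graph ∧ R = connectedComponentIn (T.graph)ᶜ x

/-- `C` is the cell of the non-initial line `ℓ` of the tree `T`: the region of
`ℂ − Γ_T` whose boundary contains the core of `ℓ`, together with the part of the
realization of `ℓ` on its boundary. -/
def IsCellOf {P : Finset ℂ} (T : SkewTree P) (ℓ : PLine P) (C : Set ℂ) : Prop :=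
  ℓ ∈ T.lines ∧ ℓ ≠ T.init ∧
  ∃ R, T.IsRegion R ∧ ℓ.core ⊆ closure R ∧
    C = R ∪ (T.realization ℓ ∩ closure R)

/-- `C` is the positive cell of the initial line: its region lies on the positive side
of the initial line, has the core on its boundary, and the cell includes the boundary
part of the realization of the initial line. -/
def IsPosCell {P : Finset ℂ} (T : SkewTree P) (C : Set ℂ) : Prop :=
  ∃ R, T.IsRegion R ∧ T.init.core ⊆ closure R ∧
    (∃ x ∈ R, (affineSpan ℝ ({T.init.a, T.init.b} : Set ℂ)).SSameSide x T.pos ∧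
      ∃ c ∈ T.init.core, openSegment ℝ x c ∩ T.graph = ∅) ∧
    C = R ∪ (T.realization T.init ∩ closure R)

/-- `C` is the negative cell of the initial line: the open region on the non-positive
side of the initial line having the core on its boundary. -/
def IsNegCell {P : Finset ℂ} (T : SkewTree P) (C : Set ℂ) : Prop :=
  ∃ R, T.IsRegion R ∧ T.init.core ⊆ closure R ∧
    (∃ x ∈ R, (affineSpan ℝ ({T.init.a, T.init.b} : Set ℂ)).SOppSide x T.pos ∧
      ∃ c ∈ T.init.core, openSegment ℝ x c ∩ T.graph = ∅) ∧
    C = R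

/-- `C` is a cell of the skewering tree `T`. -/
def IsCell {P : Finset ℂ} (T : SkewTree P) (C : Set ℂ) : Prop :=
  (∃ ℓ, IsCellOf T ℓ C) ∨ IsPosCell T C ∨ IsNegCell T C





lemma c_add_smul_re (c w : ℂ) (t : ℝ) : (c + t • w).re = c.re + t * w.re := by
  rw [Complex.add_re, Complex.smul_re, smul_eq_mul]

lemma c_add_smul_im (c w : ℂ) (t : ℝ) : (c + t • w).im = c.im + t * w.im := by
  rw [Complex.add_im, Complex.smul_im, smul_eq_mul]

lemma mem_lineThrough_iff {u v z : ℂ} :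
    z ∈ lineThrough u v ↔ ∃ t : ℝ, z = u + t • (v - u) := by
  constructor
  · intro hz
    have h2 : (z - u) +ᵥ u ∈ line[ℝ, u, v] := by
      rw [vadd_eq_add, sub_add_cancel]; exact hz
    rw [vadd_left_mem_affineSpan_pair] at h2
    obtain ⟨r, hr⟩ := h2
    refine ⟨r, ?_⟩
    have h3 : r • (v - u) = z - u := hr
    rw [h3]; ring
  · rintro ⟨t, rfl⟩
    have h1 := AffineMap.lineMap_mem_affineSpan_pair (k := ℝ) t u v
    have heq : (AffineMap.lineMap u v t : ℂ) = u + t • (v - u) := by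
      rw [AffineMap.lineMap_apply_module]; module
    rw [heq] at h1
    exact h1

lemma lineThrough_comm (u v : ℂ) : lineThrough u v = lineThrough v u := by
  unfold lineThrough
  rw [Set.pair_comm]

lemma cross2_lineMap (c d u v : ℂ) (t : ℝ) :
    cross2 c d (u + t • (v - u)) = (1 - t) * cross2 c d u + t * cross2 c d v := by
  simp only [cross2, c_add_smul_re, c_add_smul_im, Complex.sub_re, Complex.sub_im]
  ring

lemma cross2_swap (c d z : ℂ) : cross2 d c z = - cross2 c d z := by
  simp only [cross2]; ring

lemma cross2_self_left (c d : ℂ) : cross2 c d c = 0 := by simp [cross2]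

lemma cross2_self_right (c d : ℂ) : cross2 c d d = 0 := by simp [cross2]; ring

lemma cross2_eq_zero_iff {c d z : ℂ} (hcd : c ≠ d) :
    cross2 c d z = 0 ↔ z ∈ lineThrough c d := by
  have hkey : cross2 c d z = (d.re - c.re) * (z.im - c.im) - (d.im - c.im) * (z.re - c.re) := rfl
  constructor
  · intro h
    rw [mem_lineThrough_iff]
    have hd : d - c ≠ 0 := sub_ne_zero.2 (Ne.symm hcd)
    by_cases hre : d.re - c.re ≠ 0
    · refine ⟨(z.re - c.re) / (d.re - c.re), ?_⟩
      apply Complex.ext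
      · rw [c_add_smul_re, Complex.sub_re]
        field_simp; ring
      · rw [c_add_smul_im, Complex.sub_im]
        rw [div_mul_eq_mul_div, eq_comm]
        rw [add_div' _ _ _ hre, div_eq_iff hre]  -- maybe fragile
        nlinarith [h]
    · push_neg at hre
      have hre' : d.re = c.re := by linarith
      have him : d.im - c.im ≠ 0 := by
        intro h'
        apply hd
        apply Complex.ext <;> simp [Complex.sub_re, Complex.sub_im] <;> linarith
      refine ⟨(z.im - c.im) / (d.im - c.im), ?_⟩
      apply Complex.ext
      · rw [c_add_smul_re, Complex.sub_re]
        rw [div_mul_eq_mul_div, eq_comm]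
        rw [add_div' _ _ _ him, div_eq_iff him]
        nlinarith [h]
      · rw [c_add_smul_im, Complex.sub_im]
        field_simp; ring
  · intro h
    rw [mem_lineThrough_iff] at h
    obtain ⟨t, rfl⟩ := h
    rw [cross2_lineMap, cross2_self_left, cross2_self_right]
    ring

lemma param_inj {v : ℂ} (hv : v ≠ 0) {x : ℂ} {s t : ℝ} (h : x + s • v = x + t • v) : s = t := by
  have h2 : (s - t) • v = 0 := by
    have h1 : s • v = t • v := by
      have := sub_eq_zero.2 h
      rw [add_sub_add_left_eq_sub, sub_eq_zero] at this
      exact this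
    rw [sub_smul, h1, sub_self]
  rcases smul_eq_zero.1 h2 with h3 | h3
  · linarith [sub_eq_zero.1 (by exact_mod_cast h3)]
  · exact absurd h3 hv

lemma param_mem_openSegment {x v : ℂ} {a b t : ℝ} (h1 : a < t) (h2 : t < b) :
    x + t • v ∈ openSegment ℝ (x + a • v) (x + b • v) := by
  rw [openSegment_eq_image']
  have hba : b - a > 0 := by linarith
  refine ⟨(t - a) / (b - a), ⟨div_pos (by linarith) hba, by rw [div_lt_one hba]; linarith⟩, ?_⟩
  show x + a • v + ((t - a) / (b - a)) • (x + b • v - (x + a • v)) = x + t • v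
  have h3 : x + b • v - (x + a • v) = (b - a) • v := by module
  rw [h3, smul_smul]
  have h4 : (t - a) / (b - a) * (b - a) = t - a := by field_simp
  rw [h4, sub_smul]
  module

lemma param_mem_segment {x v : ℂ} {a b t : ℝ} (h1 : a ≤ t) (h2 : t ≤ b) :
    x + t • v ∈ segment ℝ (x + a • v) (x + b • v) := by
  rcases eq_or_lt_of_le h1 with rfl | h1'
  · exact left_mem_segment ℝ _ _
  rcases eq_or_lt_of_le h2 with rfl | h2'
  · exact right_mem_segment ℝ _ _
  exact openSegment_subset_segment ℝ _ _ (param_mem_openSegment h1' h2')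

lemma param_of_mem_segment {x v : ℂ} (hv : v ≠ 0) {a b t : ℝ}
    (h : x + t • v ∈ segment ℝ (x + a • v) (x + b • v)) :
    (a ≤ t ∧ t ≤ b) ∨ (b ≤ t ∧ t ≤ a) := by
  rw [segment_eq_image'] at h
  obtain ⟨θ, ⟨hθ0, hθ1⟩, heq⟩ := h
  simp only [] at heq
  have h3 : x + b • v - (x + a • v) = (b - a) • v := by module
  rw [h3, smul_smul] at heq
  have ht : t = a + θ * (b - a) := by
    have h5 : x + (a + θ * (b - a)) • v = x + t • v := by
      rw [add_smul, ← heq]; module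
    exact (param_inj hv h5).symm
  rcases le_total a b with hab | hab
  · left; constructor <;> nlinarith
  · right; constructor <;> nlinarith

lemma param_of_mem_openSegment {x v : ℂ} (hv : v ≠ 0) {a b t : ℝ} (hab : a ≠ b)
    (h : x + t • v ∈ openSegment ℝ (x + a • v) (x + b • v)) :
    (a < t ∧ t < b) ∨ (b < t ∧ t < a) := by
  rw [openSegment_eq_image'] at h
  obtain ⟨θ, ⟨hθ0, hθ1⟩, heq⟩ := h
  simp only [] at heq
  have h3 : x + b • v - (x + a • v) = (b - a) • v := by module
  rw [h3, smul_smul] at heq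
  have ht : t = a + θ * (b - a) := by
    have h5 : x + (a + θ * (b - a)) • v = x + t • v := by
      rw [add_smul, ← heq]; module
    exact (param_inj hv h5).symm
  rcases lt_or_gt_of_ne hab with hab' | hab'
  · left; constructor <;> nlinarith
  · right; constructor <;> nlinarith


lemma lineThrough_eq_of_mem {u v z₁ z₂ : ℂ} (hz : z₁ ≠ z₂)
    (h1 : z₁ ∈ lineThrough u v) (h2 : z₂ ∈ lineThrough u v) :
    lineThrough u v = lineThrough z₁ z₂ := by
  rw [mem_lineThrough_iff] at h1 h2
  obtain ⟨s, rfl⟩ := h1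
  obtain ⟨t, rfl⟩ := h2
  have hst : s ≠ t := by rintro rfl; exact hz rfl
  have hw : v - u ≠ 0 := by
    rintro h0
    rw [h0] at hz
    simp at hz
  have hts : t - s ≠ 0 := sub_ne_zero.2 (Ne.symm hst)
  have hdiff : (u + t • (v - u)) - (u + s • (v - u)) = (t - s) • (v - u) := by
    rw [sub_smul]; module
  ext z
  rw [mem_lineThrough_iff, mem_lineThrough_iff]
  constructor
  · rintro ⟨r, rfl⟩
    refine ⟨(r - s) / (t - s), ?_⟩
    rw [hdiff, smul_smul]
    have h4 : (r - s) / (t - s) * (t - s) = r - s := by field_simp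
    rw [h4, sub_smul]
    module
  · rintro ⟨ρ, rfl⟩
    refine ⟨s + ρ * (t - s), ?_⟩
    rw [hdiff, smul_smul, add_smul, mul_smul]
    module

lemma triangle_interior {t0 t1 t2 m x : ℂ}
    (h : ¬ Collinear ℝ ({t0, t1, t2} : Set ℂ))
    (hm : m ∈ openSegment ℝ t1 t2) (hx : x ∈ openSegment ℝ t0 m) :
    x ∈ interior (convexHull ℝ ({t0, t1, t2} : Set ℂ)) := by
  have hind : AffineIndependent ℝ ![t0, t1, t2] := affineIndependent_iff_not_collinear_set.mpr h
  have htop : affineSpan ℝ (Set.range ![t0, t1, t2]) = ⊤ := by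
    rw [hind.affineSpan_eq_top_iff_card_eq_finrank_add_one]
    simp [Complex.finrank_real_complex]
  let b : AffineBasis (Fin 3) ℝ ℂ := ⟨![t0, t1, t2], hind, htop⟩
  have hb : ⇑b = ![t0, t1, t2] := rfl
  have hrange : Set.range ⇑b = ({t0, t1, t2} : Set ℂ) := by
    rw [hb]
    ext z
    simp [Matrix.range_cons, Matrix.range_empty]
    tauto
  rw [openSegment_eq_image'] at hm hx
  obtain ⟨w, ⟨hw0, hw1⟩, hmw⟩ := hm
  obtain ⟨s, ⟨hs0, hs1⟩, hxs⟩ := hx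
  simp only [] at hmw hxs
  set W : Fin 3 → ℝ := ![1 - s, s * (1 - w), s * w] with hW
  have hWsum : Finset.univ.sum W = 1 := by
    simp [hW, Fin.sum_univ_three]
    ring
  have hcomb : Finset.univ.affineCombination ℝ ⇑b W = x := by
    rw [Finset.univ.affineCombination_eq_linear_combination _ _ hWsum]
    rw [hb]
    rw [← hxs, ← hmw]
    simp only [Fin.sum_univ_three, hW]
    show (1 - s) • t0 + (s * (1 - w)) • t1 + (s * w) • t2 = _
    simp only [sub_smul, one_smul, mul_smul, smul_sub]
    module
  rw [← hrange, b.interior_convexHull, Set.mem_setOf_eq]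
  intro i
  have hco : b.coord i (Finset.univ.affineCombination ℝ ⇑b W) = W i :=
    b.coord_apply_combination_of_mem (Finset.mem_univ i) hWsum
  rw [hcomb] at hco
  rw [hco]
  fin_cases i
  · show 0 < 1 - s; linarith
  · show 0 < s * (1 - w); nlinarith
  · show 0 < s * w; nlinarith

lemma not_extreme_of_interior {s : Set ℂ} {x : ℂ} (hx : x ∈ interior s) :
    x ∉ Set.extremePoints ℝ s := by
  rintro ⟨-, hext⟩
  obtain ⟨ε, hε, hball⟩ := Metric.isOpen_iff.1 isOpen_interior x hx
  have hd : ∀ y : ℂ, dist y x < ε → y ∈ s := fun y hy => interior_subset (hball hy)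
  have hεc : ((ε / 2 : ℝ) : ℂ) ≠ 0 := by
    simp only [ne_eq, Complex.ofReal_eq_zero]
    linarith
  have h₁ : x - ((ε / 2 : ℝ) : ℂ) ∈ s := by
    apply hd
    rw [Complex.dist_eq]
    have : x - ((ε / 2 : ℝ) : ℂ) - x = -((ε / 2 : ℝ) : ℂ) := by ring
    rw [this, norm_neg, Complex.norm_real, Real.norm_eq_abs]
    rw [abs_of_pos (by linarith)]
    linarith
  have h₂ : x + ((ε / 2 : ℝ) : ℂ) ∈ s := by
    apply hd
    rw [Complex.dist_eq]
    have : x + ((ε / 2 : ℝ) : ℂ) - x = ((ε / 2 : ℝ) : ℂ) := by ring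
    rw [this, Complex.norm_real, Real.norm_eq_abs]
    rw [abs_of_pos (by linarith)]
    linarith
  have hseg : x ∈ openSegment ℝ (x - ((ε / 2 : ℝ) : ℂ)) (x + ((ε / 2 : ℝ) : ℂ)) := by
    refine ⟨1/2, 1/2, by norm_num, by norm_num, by norm_num, ?_⟩
    module
  obtain heq := hext h₁ h₂ hseg
  apply hεc
  have := sub_eq_zero.2 heq
  simp only [sub_sub_cancel_left] at this
  linear_combination -this

lemma convexHull_extreme_finset (E : Finset ℂ) :
    convexHull ℝ (((E.filter (fun x => x ∈ (convexHull ℝ (E : Set ℂ)).extremePoints ℝ)) : Finset ℂ) : Set ℂ)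
      = convexHull ℝ (E : Set ℂ) := by
  have hsub : (convexHull ℝ (E : Set ℂ)).extremePoints ℝ ⊆ (E : Set ℂ) :=
    extremePoints_convexHull_subset
  have hcoe : (((E.filter (fun x => x ∈ (convexHull ℝ (E : Set ℂ)).extremePoints ℝ)) : Finset ℂ) : Set ℂ)
      = (convexHull ℝ (E : Set ℂ)).extremePoints ℝ := by
    ext z
    simp only [Finset.coe_filter, Set.mem_setOf_eq, Finset.mem_coe]
    constructor
    · rintro ⟨-, h⟩; exact h
    · intro h; exact ⟨hsub h, h⟩
  rw [hcoe]
  have hKM := closure_convexHull_extremePoints (E.finite_toSet.isCompact_convexHull ℝ)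
    (convex_convexHull ℝ (E : Set ℂ))
  have hclosed : IsClosed (convexHull ℝ ((convexHull ℝ (E : Set ℂ)).extremePoints ℝ)) :=
    (E.finite_toSet.subset hsub).isClosed_convexHull ℝ
  conv_rhs => rw [← hKM]
  exact hclosed.closure_eq.symm

section Main

variable {P : Finset ℂ}

lemma openSeg01 (x y : ℂ) {t : ℝ} (h0 : 0 < t) (h1 : t < 1) :
    x + t • (y - x) ∈ openSegment ℝ x y := by
  have h := param_mem_openSegment (x := x) (v := y - x) h0 h1
  have e0 : x + (0:ℝ) • (y - x) = x := by module
  have e1 : x + (1:ℝ) • (y - x) = y := by module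
  rwa [e0, e1] at h

lemma seg01 (x y : ℂ) {t : ℝ} (h0 : 0 ≤ t) (h1 : t ≤ 1) :
    x + t • (y - x) ∈ segment ℝ x y := by
  have h := param_mem_segment (x := x) (v := y - x) h0 h1
  have e0 : x + (0:ℝ) • (y - x) = x := by module
  have e1 : x + (1:ℝ) • (y - x) = y := by module
  rwa [e0, e1] at h

lemma openSeg_beyond (x y : ℂ) {t : ℝ} (h1 : 1 < t) :
    y ∈ openSegment ℝ x (x + t • (y - x)) := by
  have h := param_mem_openSegment (x := x) (v := y - x) zero_lt_one h1
  have e0 : x + (0:ℝ) • (y - x) = x := by module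
  have e1 : x + (1:ℝ) • (y - x) = y := by module
  rw [e0] at h
  rwa [e1] at h

lemma seg_param {x y : ℂ} {t : ℝ} (hxy : x ≠ y) (h : x + t • (y - x) ∈ segment ℝ x y) :
    0 ≤ t ∧ t ≤ 1 := by
  have e0 : x + (0:ℝ) • (y - x) = x := by module
  have e1 : x + (1:ℝ) • (y - x) = y := by module
  have hset : segment ℝ x y = segment ℝ (x + (0:ℝ) • (y - x)) (x + (1:ℝ) • (y - x)) := by
    rw [e0, e1]
  rw [hset] at h
  have hv : y - x ≠ 0 := sub_ne_zero.2 (Ne.symm hxy)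
  rcases param_of_mem_segment hv h with ⟨h2, h3⟩ | ⟨h2, h3⟩
  · exact ⟨h2, h3⟩
  · constructor <;> linarith

lemma openSeg_param {x y : ℂ} {t : ℝ} (hxy : x ≠ y) (h : x + t • (y - x) ∈ openSegment ℝ x y) :
    0 < t ∧ t < 1 := by
  have e0 : x + (0:ℝ) • (y - x) = x := by module
  have e1 : x + (1:ℝ) • (y - x) = y := by module
  have hset : openSegment ℝ x y = openSegment ℝ (x + (0:ℝ) • (y - x)) (x + (1:ℝ) • (y - x)) := by
    rw [e0, e1]
  rw [hset] at h
  have hv : y - x ≠ 0 := sub_ne_zero.2 (Ne.symm hxy)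
  rcases param_of_mem_openSegment hv (by norm_num) h with ⟨h2, h3⟩ | ⟨h2, h3⟩
  · exact ⟨h2, h3⟩
  · constructor <;> linarith

lemma mem_openSegment_of_ne' {x y z : ℂ} (hz : z ∈ segment ℝ x y)
    (h1 : z ≠ x) (h2 : z ≠ y) : z ∈ openSegment ℝ x y := by
  rw [segment_eq_image'] at hz
  obtain ⟨θ, ⟨hθ0, hθ1⟩, hzeq⟩ := hz
  simp only [] at hzeq
  have hθ0' : θ ≠ 0 := by
    rintro rfl
    exact h1 (by rw [← hzeq]; module)
  have hθ1' : θ ≠ 1 := by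
    rintro rfl
    exact h2 (by rw [← hzeq]; module)
  rw [← hzeq]
  exact openSeg01 x y (lt_of_le_of_ne hθ0 (Ne.symm hθ0')) (lt_of_le_of_ne hθ1 hθ1')

lemma combo_neg {fa fb t : ℝ} (ha : fa < 0) (hb : fb < 0) (h0 : 0 ≤ t) (h1 : t ≤ 1) :
    (1 - t) * fa + t * fb < 0 := by
  rcases eq_or_lt_of_le h1 with rfl | h1'
  · simpa using hb
  · nlinarith [mul_pos (by linarith : (0:ℝ) < 1 - t) (by linarith : (0:ℝ) < -fa),
      mul_nonneg h0 (by linarith : (0:ℝ) ≤ -fb)]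

lemma combo_pos {fa fb t : ℝ} (ha : 0 < fa) (hb : 0 < fb) (h0 : 0 ≤ t) (h1 : t ≤ 1) :
    0 < (1 - t) * fa + t * fb := by
  rcases eq_or_lt_of_le h1 with rfl | h1'
  · simpa using hb
  · nlinarith [mul_pos (by linarith : (0:ℝ) < 1 - t) ha, mul_nonneg h0 hb.le]

lemma convex_pos_side (c d : ℂ) : Convex ℝ {z : ℂ | 0 < cross2 c d z} := by
  intro x hx y hy a b ha hb hab
  have h1 : a • x + b • y = x + b • (y - x) := by
    have h2 : a = 1 - b := by linarith
    rw [h2]; module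
  rw [Set.mem_setOf_eq, h1, cross2_lineMap]
  exact combo_pos hx hy hb (by linarith)

lemma collinear_of_mem_lineThrough {u v z : ℂ} (h : z ∈ lineThrough u v) :
    Collinear ℝ ({z, u, v} : Set ℂ) :=
  collinear_insert_of_mem_affineSpan_pair h

lemma mem_lineThrough_of_collinear {u v z : ℂ} (huv : u ≠ v)
    (h : Collinear ℝ ({z, u, v} : Set ℂ)) : z ∈ lineThrough u v := by
  exact h.mem_affineSpan_of_mem_of_ne (by simp) (by simp) (by simp) huv

lemma core_subset_carrier (ℓ : PLine P) : ℓ.core ⊆ ℓ.carrier := by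
  have h1 : ℓ.a ∈ affineSpan ℝ ({ℓ.a, ℓ.b} : Set ℂ) := left_mem_affineSpan_pair ℝ _ _
  have h2 : ℓ.b ∈ affineSpan ℝ ({ℓ.a, ℓ.b} : Set ℂ) := right_mem_affineSpan_pair ℝ _ _
  have hconv : Convex ℝ ((affineSpan ℝ ({ℓ.a, ℓ.b} : Set ℂ) : Set ℂ)) :=
    (affineSpan ℝ ({ℓ.a, ℓ.b} : Set ℂ)).convex
  exact hconv.segment_subset h1 h2

lemma carrier_ne_of_ne (T : SkewTree P) {α β : PLine P} (hα : α ∈ T.lines)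
    (hβ : β ∈ T.lines) (hne : α ≠ β) : α.carrier ≠ β.carrier :=
  fun h => hne (T.carrier_inj α hα β hβ h)

lemma no_shared_end (T : SkewTree P) {α β : PLine P} (hα : α ∈ T.lines)
    (hβ : β ∈ T.lines) (hne : α ≠ β) {x : ℂ}
    (hxa : x = α.a ∨ x = α.b) (hxb : x = β.a ∨ x = β.b) : False := by
  apply T.no_internal α hα β hβ hne
  refine ⟨carrier_ne_of_ne T hα hβ hne, x, ?_, ?_⟩
  · rcases hxa with rfl | rfl
    · exact left_mem_segment ℝ _ _
    · exact right_mem_segment ℝ _ _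
  · rcases hxb with rfl | rfl
    · exact left_mem_segment ℝ _ _
    · exact right_mem_segment ℝ _ _

lemma leaf_avoid (T : SkewTree P) {ℓ : PLine P} (hleaf : T.IsLeaf ℓ) {β : PLine P}
    (hβ : β ∈ T.lines) (hne : β ≠ ℓ) : ∀ z ∈ β.core, z ∉ ℓ.carrier := by
  intro z hz hzL
  by_cases hzc : z ∈ ℓ.core
  · exact T.no_internal ℓ hleaf.1 β hβ (Ne.symm hne)
      ⟨carrier_ne_of_ne T hleaf.1 hβ (Ne.symm hne), z, hzc, hz⟩
  · exact hleaf.2.2 β hβ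
      ⟨carrier_ne_of_ne T hleaf.1 hβ (Ne.symm hne), z, hzL, core_subset_carrier β hz, hz, hzc⟩

/-- Decomposition of a skewer: `p` the crossing point, `u` the far endpoint of the skewering
line, `v` the link vertex. -/
lemma skewer_decomp (hgp : GenPos P) (T : SkewTree P) {α β : PLine P} (hα : α ∈ T.lines)
    (hβ : β ∈ T.lines) (hsk : Skewers α β) :
    ∃ u v ρ p, ((u = α.a ∧ v = α.b) ∨ (u = α.b ∧ v = α.a)) ∧ (1:ℝ) < ρ ∧
      p ∈ α.carrier ∧ p ∈ β.carrier ∧ p ∈ openSegment ℝ β.a β.b ∧ p ∉ α.core ∧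
      p = u + ρ • (v - u) ∧ v ∈ openSegment ℝ u p ∧ IsLinkVertex v α β := by
  obtain ⟨hcne, p, hp1, hp2, hpc2, hpnc1⟩ := hsk
  have hne : α ≠ β := by rintro rfl; exact hcne rfl
  obtain ⟨r, hr⟩ := mem_lineThrough_iff.1 hp1
  have hr01 : ¬ (0 ≤ r ∧ r ≤ 1) := by
    rintro ⟨h0, h1⟩
    exact hpnc1 (by rw [hr]; exact seg01 _ _ h0 h1)
  push_neg at hr01
  have hpa : p ≠ β.a := by
    rintro rfl
    exact hgp _ β.ha α.a α.ha α.b α.hb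
      (fun h => no_shared_end T hβ hα (Ne.symm hne) (Or.inl rfl) (Or.inl h))
      (fun h => no_shared_end T hβ hα (Ne.symm hne) (Or.inl rfl) (Or.inr h))
      α.hab (collinear_of_mem_lineThrough hp1)
  have hpb : p ≠ β.b := by
    rintro rfl
    exact hgp _ β.hb α.a α.ha α.b α.hb
      (fun h => no_shared_end T hβ hα (Ne.symm hne) (Or.inr rfl) (Or.inl h))
      (fun h => no_shared_end T hβ hα (Ne.symm hne) (Or.inr rfl) (Or.inr h))
      α.hab (collinear_of_mem_lineThrough hp1)
  have hpopen : p ∈ openSegment ℝ β.a β.b := mem_openSegment_of_ne' hpc2 hpa hpb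
  by_cases hcase : 1 < r
  · have hvopen : α.b ∈ openSegment ℝ α.a p := by rw [hr]; exact openSeg_beyond _ _ hcase
    refine ⟨α.a, α.b, r, p, Or.inl ⟨rfl, rfl⟩, hcase, hp1, hp2, hpopen, hpnc1, hr, hvopen, ?_, ?_⟩
    · simp [PLine.ends]
    · have hnc : ¬ Collinear ℝ ({α.a, β.a, β.b} : Set ℂ) :=
        hgp α.a α.ha β.a β.ha β.b β.hb
          (fun h => no_shared_end T hα hβ hne (Or.inl rfl) (Or.inl h))
          (fun h => no_shared_end T hα hβ hne (Or.inl rfl) (Or.inr h))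
          β.hab
      have hint := triangle_interior hnc hpopen hvopen
      refine interior_mono (convexHull_mono ?_) hint
      intro z hz
      rcases hz with rfl | rfl | rfl
      · exact Set.mem_insert _ _
      · exact Set.mem_insert_of_mem _ (Set.mem_insert_of_mem _ (Set.mem_insert _ _))
      · exact Set.mem_insert_of_mem _ (Set.mem_insert_of_mem _ (Set.mem_insert_of_mem _ rfl))
  · have hrneg : r < 0 := by
      rcases lt_or_ge r 0 with h | h
      · exact h
      · linarith [hr01 h]
    have hp' : p = α.b + (1 - r) • (α.a - α.b) := by rw [hr]; module
    have hvopen : α.a ∈ openSegment ℝ α.b p := by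
      rw [hp']; exact openSeg_beyond _ _ (by linarith)
    refine ⟨α.b, α.a, 1 - r, p, Or.inr ⟨rfl, rfl⟩, by linarith, hp1, hp2, hpopen, hpnc1, hp',
      hvopen, ?_, ?_⟩
    · simp [PLine.ends]
    · have hnc : ¬ Collinear ℝ ({α.b, β.a, β.b} : Set ℂ) :=
        hgp α.b α.hb β.a β.ha β.b β.hb
          (fun h => no_shared_end T hα hβ hne (Or.inr rfl) (Or.inl h))
          (fun h => no_shared_end T hα hβ hne (Or.inr rfl) (Or.inr h))
          β.hab
      have hint := triangle_interior hnc hpopen hvopen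
      refine interior_mono (convexHull_mono ?_) hint
      intro z hz
      rcases hz with rfl | rfl | rfl
      · exact Set.mem_insert_of_mem _ (Set.mem_insert _ _)
      · exact Set.mem_insert_of_mem _ (Set.mem_insert_of_mem _ (Set.mem_insert _ _))
      · exact Set.mem_insert_of_mem _ (Set.mem_insert_of_mem _ (Set.mem_insert_of_mem _ rfl))

def endFinset (T : SkewTree P) : Finset ℂ :=
  T.finite.toFinset.biUnion (fun α => {α.a, α.b})

lemma mem_endFinset {T : SkewTree P} {x : ℂ} :
    x ∈ endFinset T ↔ ∃ α ∈ T.lines, x = α.a ∨ x = α.b := by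
  simp only [endFinset, Finset.mem_biUnion, Set.Finite.mem_toFinset, Finset.mem_insert,
    Finset.mem_singleton]

lemma endFinset_card (T : SkewTree P) : (endFinset T).card = 2 * T.finite.toFinset.card := by
  rw [endFinset, Finset.card_biUnion]
  · rw [Finset.sum_congr rfl (fun α _ => Finset.card_pair α.hab)]
    rw [Finset.sum_const, smul_eq_mul, mul_comm]
  · intro α hα β hβ hne
    rw [Function.onFun, Finset.disjoint_left]
    intro x hxα hxβ
    exact no_shared_end T (T.finite.mem_toFinset.1 hα) (T.finite.mem_toFinset.1 hβ) hne
      (by simpa using hxα) (by simpa using hxβ)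

lemma leaf_end_not_interior (hgp : GenPos P) (hΔ : PropertyDelta P 2) (T : SkewTree P)
    {ℓ : PLine P} (hleaf : T.IsLeaf ℓ) {x : ℂ} (hx : x = ℓ.a ∨ x = ℓ.b) :
    x ∉ interior (convexHull ℝ ((endFinset T : Finset ℂ) : Set ℂ)) := by
  intro hxint
  set E := endFinset T with hE
  set n := T.finite.toFinset.card with hn
  have hn1 : 1 ≤ n := Finset.card_pos.2 ⟨T.init, T.finite.mem_toFinset.2 T.init_mem⟩
  have hEP : E ⊆ P := by
    intro z hz
    rcases mem_endFinset.1 hz with ⟨α, hα, h | h⟩ <;> subst h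
    · exact α.ha
    · exact α.hb
  have h4sub : ∀ γ β : PLine P, γ ∈ T.lines → β ∈ T.lines →
      interior (convexHull ℝ ({γ.a, γ.b, β.a, β.b} : Set ℂ)) ⊆
        interior (convexHull ℝ (E : Set ℂ)) := by
    intro γ β hγ hβ
    apply interior_mono
    apply convexHull_mono
    intro z hz
    rcases hz with rfl | rfl | rfl | rfl
    · exact Finset.mem_coe.2 (mem_endFinset.2 ⟨γ, hγ, Or.inl rfl⟩)
    · exact Finset.mem_coe.2 (mem_endFinset.2 ⟨γ, hγ, Or.inr rfl⟩)
    · exact Finset.mem_coe.2 (mem_endFinset.2 ⟨β, hβ, Or.inl rfl⟩)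
    · exact Finset.mem_coe.2 (mem_endFinset.2 ⟨β, hβ, Or.inr rfl⟩)
  set A := E.filter (fun y => y ∈ (convexHull ℝ (E : Set ℂ)).extremePoints ℝ) with hA
  have hhull : convexHull ℝ (A : Set ℂ) = convexHull ℝ (E : Set ℂ) := convexHull_extreme_finset E
  have hAsub : A ⊆ E := Finset.filter_subset _ _
  have hconvsub : ConvexSubset P A := by
    refine ⟨hAsub.trans hEP, ?_⟩
    intro a ha hint
    have hext := (Finset.mem_filter.1 ha).2
    rw [hhull] at hint
    exact not_extreme_of_interior hint hext
  have hΔA := hΔ A hconvsub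
  set LF := T.finite.toFinset.erase T.init with hLF
  have hLFcard : LF.card = n - 1 := Finset.card_erase_of_mem (T.finite.mem_toFinset.2 T.init_mem)
  have hLFlines : ∀ β ∈ LF, β ∈ T.lines := fun β hβ =>
    T.finite.mem_toFinset.1 (Finset.mem_of_mem_erase hβ)
  have hΦ : ∀ β : PLine P, β ∈ LF → ∃ γx : PLine P × ℂ, γx.1 ∈ T.lines ∧ Skewers γx.1 β ∧
      IsLinkVertex γx.2 γx.1 β ∧ (γx.2 = γx.1.a ∨ γx.2 = γx.1.b) := by
    intro β hβ
    have hβl : β ∈ T.lines := hLFlines β hβ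
    have hβne : β ≠ T.init := Finset.ne_of_mem_erase hβ
    obtain ⟨γ, ⟨hγl, hγsk⟩, -⟩ := T.skewered β hβl hβne
    obtain ⟨u, v, ρ, p, huv, -, -, -, -, -, -, -, hlv⟩ := skewer_decomp hgp T hγl hβl hγsk
    refine ⟨(γ, v), hγl, hγsk, hlv, ?_⟩
    rcases huv with ⟨-, h⟩ | ⟨-, h⟩
    · exact Or.inr h
    · exact Or.inl h
  choose Φ hΦ1 hΦ2 hΦ3 hΦ4 using hΦ
  set g : {β // β ∈ LF} → ℂ := fun b => (Φ b.1 b.2).2 with hg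
  set S := LF.attach.image g with hS
  have hginj : Set.InjOn g LF.attach := by
    intro b₁ hb₁ b₂ hb₂ heq
    have h := T.link_unique (g b₁) (Φ b₁.1 b₁.2).1 (hΦ1 b₁.1 b₁.2) b₁.1 (hLFlines b₁.1 b₁.2)
      (Φ b₂.1 b₂.2).1 (hΦ1 b₂.1 b₂.2) b₂.1 (hLFlines b₂.1 b₂.2)
      (hΦ2 b₁.1 b₁.2) (hΦ2 b₂.1 b₂.2) (hΦ3 b₁.1 b₁.2) (by rw [heq]; exact hΦ3 b₂.1 b₂.2)
    exact Subtype.ext h.2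
  have hScard : S.card = n - 1 := by
    rw [hS, Finset.card_image_of_injOn hginj, Finset.card_attach, hLFcard]
  have hSsub : S ⊆ intPts P A := by
    intro y hy
    obtain ⟨b, -, rfl⟩ := Finset.mem_image.1 hy
    have hlv := hΦ3 b.1 b.2
    have hyP : g b ∈ P := by
      show (Φ b.1 b.2).2 ∈ P
      rcases hΦ4 b.1 b.2 with h | h
      · rw [h]; exact (Φ b.1 b.2).1.ha
      · rw [h]; exact (Φ b.1 b.2).1.hb
    have hyint : g b ∈ interior (convexHull ℝ (A : Set ℂ)) := by
      rw [hhull]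
      exact h4sub _ _ (hΦ1 b.1 b.2) (hLFlines b.1 b.2) hlv.2
    exact Finset.mem_filter.2 ⟨hyP, hyint⟩
  have hxS : x ∉ S := by
    intro hxs
    obtain ⟨b, -, heq⟩ := Finset.mem_image.1 hxs
    have hγne : (Φ b.1 b.2).1 ≠ ℓ := by
      rintro h
      exact hleaf.2.2 b.1 (hLFlines b.1 b.2) (h ▸ hΦ2 b.1 b.2)
    exact no_shared_end T (hΦ1 b.1 b.2) hleaf.1 hγne (by rw [← heq]; exact hΦ4 b.1 b.2) hx
  have hxP : x ∈ P := by
    rcases hx with rfl | rfl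
    · exact ℓ.ha
    · exact ℓ.hb
  have hxI : x ∈ intPts P A := by
    refine Finset.mem_filter.2 ⟨hxP, ?_⟩
    rw [hhull]
    exact hxint
  have hsub2 : insert x S ⊆ intPts P A := by
    intro y hy
    rcases Finset.mem_insert.1 hy with rfl | hy'
    · exact hxI
    · exact hSsub hy'
  have hcard2 : (insert x S).card = n := by
    rw [Finset.card_insert_of_notMem hxS, hScard]
    omega
  have hIlow : n ≤ (intPts P A).card := by
    rw [← hcard2]
    exact Finset.card_le_card hsub2
  have hAup : A.card + n ≤ 2 * n := by
    have hdisj : Disjoint A (insert x S) := by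
      rw [Finset.disjoint_left]
      intro a ha ha2
      have hext := (Finset.mem_filter.1 ha).2
      have haint : a ∈ interior (convexHull ℝ (E : Set ℂ)) := by
        rcases Finset.mem_insert.1 ha2 with rfl | ha3
        · exact hxint
        · have := hSsub ha3
          have h2 := (Finset.mem_filter.1 this).2
          rwa [hhull] at h2
      exact not_extreme_of_interior haint hext
    have hsubE : A ∪ insert x S ⊆ E := by
      intro y hy
      rcases Finset.mem_union.1 hy with hy' | hy'
      · exact hAsub hy'
      · rcases Finset.mem_insert.1 hy' with rfl | hy'' 
        · rcases hx with rfl | rfl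
          · exact mem_endFinset.2 ⟨ℓ, hleaf.1, Or.inl rfl⟩
          · exact mem_endFinset.2 ⟨ℓ, hleaf.1, Or.inr rfl⟩
        · obtain ⟨b, -, rfl⟩ := Finset.mem_image.1 hy''
          show (Φ b.1 b.2).2 ∈ E
          rcases hΦ4 b.1 b.2 with h | h
          · rw [h]; exact mem_endFinset.2 ⟨(Φ b.1 b.2).1, hΦ1 b.1 b.2, Or.inl rfl⟩
          · rw [h]; exact mem_endFinset.2 ⟨(Φ b.1 b.2).1, hΦ1 b.1 b.2, Or.inr rfl⟩
    have h1 := Finset.card_le_card hsubE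
    rw [Finset.card_union_of_disjoint hdisj, hcard2] at h1
    calc A.card + n ≤ E.card := h1
    _ = 2 * n := endFinset_card T
  have hfin : (n : ℤ) + 1 ≤ (A.card : ℤ) := by
    have : ((intPts P A).card : ℤ) ≤ (A.card : ℤ) + 2 - 3 := hΔA
    have h2 : (n : ℤ) ≤ ((intPts P A).card : ℤ) := by exact_mod_cast hIlow
    omega
  have hfin' : n + 1 ≤ A.card := by exact_mod_cast hfin
  omega

lemma cross_zero_between {c d w₁ w₂ : ℂ} (ha : 0 < cross2 c d w₁) (hb : cross2 c d w₂ < 0) :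
    ∃ z ∈ segment ℝ w₁ w₂, cross2 c d z = 0 := by
  set t := cross2 c d w₁ / (cross2 c d w₁ - cross2 c d w₂) with ht
  have hden : 0 < cross2 c d w₁ - cross2 c d w₂ := by linarith
  have ht0 : 0 ≤ t := le_of_lt (div_pos ha hden)
  have ht1 : t ≤ 1 := by rw [ht, div_le_one hden]; linarith
  refine ⟨w₁ + t • (w₂ - w₁), seg01 _ _ ht0 ht1, ?_⟩
  rw [cross2_lineMap]
  have h5 : t * (cross2 c d w₁ - cross2 c d w₂) = cross2 c d w₁ := by
    rw [ht]; field_simp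
  linear_combination -h5


end Main

/-- If `P` satisfies Property `Δ₂`, `T` is a skewering tree, `ℓ` is a leaf of `T`, and
`ℓ₁ ⊣ ℓ₂` in `T` with `ℓ, ℓ₁, ℓ₂` distinct, then the line `ℓ` does not intersect the
convex hull of the four endpoints of `ℓ₁` and `ℓ₂`. -/
theorem leaf_disjoint_skewer_hull (P : Finset ℂ) (hgp : GenPos P)
    (hΔ : PropertyDelta P 2) (T : SkewTree P) (ℓ ℓ₁ ℓ₂ : PLine P)
    (hℓ : T.IsLeaf ℓ) (h₁ : ℓ₁ ∈ T.lines) (h₂ : ℓ₂ ∈ T.lines)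
    (hne₁ : ℓ ≠ ℓ₁) (hne₂ : ℓ ≠ ℓ₂) (hne₃ : ℓ₁ ≠ ℓ₂)
    (hsk : Skewers ℓ₁ ℓ₂) :
    Disjoint ℓ.carrier (convexHull ℝ ({ℓ₁.a, ℓ₁.b, ℓ₂.a, ℓ₂.b} : Set ℂ)) := by
  rw [Set.disjoint_left]
  intro x₀ hx₀L hx₀H
  have hℓl := hℓ.1
  have hav₁ := leaf_avoid T hℓ h₁ (Ne.symm hne₁)
  have hav₂ := leaf_avoid T hℓ h₂ (Ne.symm hne₂)
  have hends_ne : ∀ z : ℂ, (z = ℓ₁.a ∨ z = ℓ₁.b) ∨ (z = ℓ₂.a ∨ z = ℓ₂.b) → z ∉ ℓ.carrier := by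
    intro z hz
    rcases hz with h | h
    · rcases h with rfl | rfl
      · exact hav₁ _ (left_mem_segment ℝ _ _)
      · exact hav₁ _ (right_mem_segment ℝ _ _)
    · rcases h with rfl | rfl
      · exact hav₂ _ (left_mem_segment ℝ _ _)
      · exact hav₂ _ (right_mem_segment ℝ _ _)
  have hsgn : cross2 ℓ.a ℓ.b ℓ₁.a ≠ 0 := by
    intro h0
    exact hends_ne ℓ₁.a (Or.inl (Or.inl rfl)) ((cross2_eq_zero_iff ℓ.hab).1 h0)
  obtain ⟨c, d, hcd, hor, hLeq, hcoreq, hfpos⟩ :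
      ∃ c d : ℂ, c ≠ d ∧ ((c = ℓ.a ∧ d = ℓ.b) ∨ (c = ℓ.b ∧ d = ℓ.a)) ∧
        ℓ.carrier = lineThrough c d ∧ ℓ.core = segment ℝ c d ∧ 0 < cross2 c d ℓ₁.a := by
    rcases lt_or_gt_of_ne hsgn with h | h
    · refine ⟨ℓ.b, ℓ.a, Ne.symm ℓ.hab, Or.inr ⟨rfl, rfl⟩, ?_, ?_, ?_⟩
      · exact lineThrough_comm ℓ.a ℓ.b
      · exact segment_symm ℝ ℓ.a ℓ.b
      · rw [cross2_swap]; linarith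
    · exact ⟨ℓ.a, ℓ.b, ℓ.hab, Or.inl ⟨rfl, rfl⟩, rfl, rfl, h⟩
  have hmemL : ∀ z : ℂ, cross2 c d z = 0 ↔ z ∈ ℓ.carrier := by
    intro z; rw [hLeq]; exact cross2_eq_zero_iff hcd
  have hc_ends : c = ℓ.a ∨ c = ℓ.b := by
    rcases hor with ⟨h1', -⟩ | ⟨h1', -⟩
    · exact Or.inl h1'
    · exact Or.inr h1'
  have hd_ends : d = ℓ.a ∨ d = ℓ.b := by
    rcases hor with ⟨-, h2'⟩ | ⟨-, h2'⟩
    · exact Or.inr h2'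
    · exact Or.inl h2'
  -- same-sign of cores of other tree lines
  have hsame : ∀ (β : PLine P), β ∈ T.lines → β ≠ ℓ →
      (0 < cross2 c d β.a ∧ 0 < cross2 c d β.b) ∨
      (cross2 c d β.a < 0 ∧ cross2 c d β.b < 0) := by
    intro β hβ hβne
    have hav := leaf_avoid T hℓ hβ hβne
    have hA : cross2 c d β.a ≠ 0 := fun h0 => hav β.a (left_mem_segment ℝ _ _) ((hmemL _).1 h0)
    have hB : cross2 c d β.b ≠ 0 := fun h0 => hav β.b (right_mem_segment ℝ _ _) ((hmemL _).1 h0)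
    rcases lt_or_gt_of_ne hA with ha | ha <;> rcases lt_or_gt_of_ne hB with hb | hb
    · exact Or.inr ⟨ha, hb⟩
    · exfalso
      obtain ⟨z, hz, hz0⟩ := cross_zero_between hb ha
      rw [segment_symm] at hz
      exact hav z hz ((hmemL _).1 hz0)
    · exfalso
      obtain ⟨z, hz, hz0⟩ := cross_zero_between ha hb
      exact hav z hz ((hmemL _).1 hz0)
    · exact Or.inl ⟨ha, hb⟩
  have hs₁' : 0 < cross2 c d ℓ₁.a ∧ 0 < cross2 c d ℓ₁.b := by
    rcases hsame ℓ₁ h₁ (Ne.symm hne₁) with h | h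
    · exact h
    · linarith [h.1]
  have hs₂' : cross2 c d ℓ₂.a < 0 ∧ cross2 c d ℓ₂.b < 0 := by
    rcases hsame ℓ₂ h₂ (Ne.symm hne₂) with h | h
    · exfalso
      have hposhull : convexHull ℝ ({ℓ₁.a, ℓ₁.b, ℓ₂.a, ℓ₂.b} : Set ℂ) ⊆
          {z : ℂ | 0 < cross2 c d z} := by
        apply convexHull_min _ (convex_pos_side c d)
        intro z hz
        rcases hz with rfl | rfl | rfl | rfl
        · exact hs₁'.1
        · exact hs₁'.2
        · exact h.1
        · exact h.2
      have h0 : cross2 c d x₀ = 0 := (hmemL x₀).2 hx₀L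
      have h0' := hposhull hx₀H
      rw [Set.mem_setOf_eq] at h0'
      linarith
    · exact h
  -- skewer decomposition for ℓ₁ ⊣ ℓ₂
  obtain ⟨u, v, ρ, p, huv, hρ, hpcar1, hpcar2, hpopen, hpnc1, hpeq, hvup, hlv12⟩ :=
    skewer_decomp hgp T h₁ h₂ hsk
  have hu_ends : u = ℓ₁.a ∨ u = ℓ₁.b := by
    rcases huv with ⟨h, -⟩ | ⟨h, -⟩
    · exact Or.inl h
    · exact Or.inr h
  have hv_ends : v = ℓ₁.a ∨ v = ℓ₁.b := by
    rcases huv with ⟨-, h⟩ | ⟨-, h⟩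
    · exact Or.inr h
    · exact Or.inl h
  have huvne : u ≠ v := by
    rcases huv with ⟨h1', h2'⟩ | ⟨h1', h2'⟩ <;> rw [h1', h2']
    · exact ℓ₁.hab
    · exact Ne.symm ℓ₁.hab
  have hfu : 0 < cross2 c d u := by
    rcases hu_ends with h | h <;> rw [h]
    · exact hs₁'.1
    · exact hs₁'.2
  have hfv : 0 < cross2 c d v := by
    rcases hv_ends with h | h <;> rw [h]
    · exact hs₁'.1
    · exact hs₁'.2
  have hfp : cross2 c d p < 0 := by
    have hps : p ∈ segment ℝ ℓ₂.a ℓ₂.b := openSegment_subset_segment ℝ _ _ hpopen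
    rw [segment_eq_image'] at hps
    obtain ⟨θ, ⟨h0, h1⟩, hpe⟩ := hps
    simp only [] at hpe
    rw [← hpe, cross2_lineMap]
    exact combo_neg hs₂'.1 hs₂'.2 h0 h1
  have hden : 0 < cross2 c d u - cross2 c d p := by linarith
  set tq := cross2 c d u / (cross2 c d u - cross2 c d p) with htq
  have htq0 : 0 < tq := div_pos hfu hden
  have htq1 : tq < 1 := by rw [htq, div_lt_one hden]; linarith
  set q := u + tq • (p - u) with hq
  have hlin : (1 - tq) * cross2 c d u + tq * cross2 c d p = 0 := by
    have h5 : tq * (cross2 c d u - cross2 c d p) = cross2 c d u := by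
      rw [htq]; field_simp
    linear_combination -h5
  have hfq : cross2 c d q = 0 := by rw [hq, cross2_lineMap]; exact hlin
  have hqL : q ∈ ℓ.carrier := (hmemL q).1 hfq
  have hρ0 : (0:ℝ) < ρ := by linarith
  have hveq : v = u + ρ⁻¹ • (p - u) := by
    have h6 : p - u = ρ • (v - u) := by rw [hpeq]; module
    rw [h6, smul_smul, inv_mul_cancel₀ (ne_of_gt hρ0), one_smul]
    module
  have h7 : cross2 c d v = (1 - ρ⁻¹) * cross2 c d u + ρ⁻¹ * cross2 c d p := by
    rw [hveq, cross2_lineMap]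
  have hsvtq : ρ⁻¹ < tq := by
    by_contra hcon
    push_neg at hcon
    have h8 := mul_nonneg (sub_nonneg.2 hcon) hden.le
    nlinarith [h7, hlin, hfv]
  have hsv0 : 0 < ρ⁻¹ := inv_pos.2 hρ0
  have hqopen_vp : q ∈ openSegment ℝ v p := by
    have h9 := param_mem_openSegment (x := u) (v := p - u) hsvtq htq1
    have e1 : u + (1:ℝ) • (p - u) = p := by module
    rw [e1, ← hveq] at h9
    exact h9
  -- membership in the convex hull of all endpoints
  have huE : u ∈ endFinset T := mem_endFinset.2 ⟨ℓ₁, h₁, hu_ends⟩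
  have hvE : v ∈ endFinset T := mem_endFinset.2 ⟨ℓ₁, h₁, hv_ends⟩
  have ha2E : ℓ₂.a ∈ endFinset T := mem_endFinset.2 ⟨ℓ₂, h₂, Or.inl rfl⟩
  have hb2E : ℓ₂.b ∈ endFinset T := mem_endFinset.2 ⟨ℓ₂, h₂, Or.inr rfl⟩
  have ha2CH : (ℓ₂.a : ℂ) ∈ convexHull ℝ ((endFinset T : Finset ℂ) : Set ℂ) :=
    subset_convexHull ℝ _ (Finset.mem_coe.2 ha2E)
  have hb2CH : (ℓ₂.b : ℂ) ∈ convexHull ℝ ((endFinset T : Finset ℂ) : Set ℂ) :=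
    subset_convexHull ℝ _ (Finset.mem_coe.2 hb2E)
  have hvCH : v ∈ convexHull ℝ ((endFinset T : Finset ℂ) : Set ℂ) :=
    subset_convexHull ℝ _ (Finset.mem_coe.2 hvE)
  have hpCH : p ∈ convexHull ℝ ((endFinset T : Finset ℂ) : Set ℂ) :=
    (convex_convexHull ℝ _).segment_subset ha2CH hb2CH (openSegment_subset_segment ℝ _ _ hpopen)
  have hqhull : q ∈ convexHull ℝ ((endFinset T : Finset ℂ) : Set ℂ) :=
    (convex_convexHull ℝ _).segment_subset hvCH hpCH (openSegment_subset_segment ℝ _ _ hqopen_vp)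
  -- helper facts about the endpoints of ℓ
  have hends_P : ∀ z : ℂ, (z = ℓ.a ∨ z = ℓ.b) → z ∈ P := by
    rintro z (rfl | rfl)
    · exact ℓ.ha
    · exact ℓ.hb
  have huP : u ∈ P := by
    rcases hu_ends with h | h <;> rw [h]
    · exact ℓ₁.ha
    · exact ℓ₁.hb
  have hends_ne_u : ∀ z : ℂ, (z = ℓ.a ∨ z = ℓ.b) → z ≠ u :=
    fun z hz h => no_shared_end T hℓl h₁ hne₁ hz (by rw [h]; exact hu_ends)
  have hends_ne_a2 : ∀ z : ℂ, (z = ℓ.a ∨ z = ℓ.b) → z ≠ ℓ₂.a :=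
    fun z hz h => no_shared_end T hℓl h₂ hne₂ hz (Or.inl h)
  have hu_ne_a2 : u ≠ ℓ₂.a :=
    fun h => no_shared_end T h₁ h₂ hne₃ hu_ends (Or.inl h)
  -- crossing point m of the segment (u, ℓ₂.a) with the line of ℓ
  have hden2 : 0 < cross2 c d u - cross2 c d ℓ₂.a := by linarith [hs₂'.1]
  set tm := cross2 c d u / (cross2 c d u - cross2 c d ℓ₂.a) with htmdef
  have htm0 : 0 < tm := div_pos hfu hden2
  have htm1 : tm < 1 := by rw [htmdef, div_lt_one hden2]; linarith [hs₂'.1]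
  set m := u + tm • (ℓ₂.a - u) with hm
  have hfm : cross2 c d m = 0 := by
    rw [hm, cross2_lineMap]
    have h5 : tm * (cross2 c d u - cross2 c d ℓ₂.a) = cross2 c d u := by
      rw [htmdef]; field_simp
    linear_combination -h5
  have hmL : m ∈ ℓ.carrier := (hmemL m).1 hfm
  have hmopen : m ∈ openSegment ℝ u ℓ₂.a := by
    rw [hm]; exact openSeg01 u ℓ₂.a htm0 htm1
  -- step: q lies in the core of ℓ
  have hqcd : q ∈ segment ℝ c d := by
    by_contra hqnot
    have hqLT : q ∈ lineThrough c d := by rw [← hLeq]; exact hqL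
    obtain ⟨tc, hqtc⟩ := mem_lineThrough_iff.1 hqLT
    have htc_out : ¬ (0 ≤ tc ∧ tc ≤ 1) := by
      rintro ⟨h0, h1⟩
      exact hqnot (by rw [hqtc]; exact seg01 _ _ h0 h1)
    obtain ⟨w, w', hw_ends, hw'_ends, hwopen⟩ :
        ∃ w w' : ℂ, (w = ℓ.a ∨ w = ℓ.b) ∧ (w' = ℓ.a ∨ w' = ℓ.b) ∧ w ∈ openSegment ℝ w' q := by
      by_cases hc1 : 1 < tc
      · refine ⟨d, c, hd_ends, hc_ends, ?_⟩
        rw [hqtc]; exact openSeg_beyond _ _ hc1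
      · have htcneg : tc < 0 := by
          rcases lt_or_ge tc 0 with h | h
          · exact h
          · exact absurd ⟨h, by linarith [not_lt.1 hc1]⟩ htc_out
        refine ⟨c, d, hc_ends, hd_ends, ?_⟩
        have hq' : q = d + (1 - tc) • (c - d) := by rw [hqtc]; module
        rw [hq']; exact openSeg_beyond _ _ (by linarith)
    have hwP : w ∈ P := hends_P w hw_ends
    have hw'P : w' ∈ P := hends_P w' hw'_ends
    have hw'_ne_u : w' ≠ u := hends_ne_u w' hw'_ends
    have hw'_ne_a2 : w' ≠ ℓ₂.a := hends_ne_a2 w' hw'_ends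
    have hw'cd : w' = c ∨ w' = d := by
      rcases hor with ⟨h1', h2'⟩ | ⟨h1', h2'⟩
      · rcases hw'_ends with h | h
        · exact Or.inl (h.trans h1'.symm)
        · exact Or.inr (h.trans h2'.symm)
      · rcases hw'_ends with h | h
        · exact Or.inr (h.trans h2'.symm)
        · exact Or.inl (h.trans h1'.symm)
    have hqw' : q ≠ w' := by
      intro h
      apply hqnot
      rw [h]
      rcases hw'cd with rfl | rfl
      · exact left_mem_segment ℝ _ _
      · exact right_mem_segment ℝ _ _
    have hwm : w ≠ m := by
      rintro rfl
      exact hgp m hwP u huP ℓ₂.a ℓ₂.ha (hends_ne_u m hw_ends) (hends_ne_a2 m hw_ends)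
        hu_ne_a2 (collinear_of_mem_lineThrough (mem_lineThrough_iff.2 ⟨tm, hm⟩))
    have hw'LT : w' ∈ lineThrough c d := by
      rcases hw'cd with rfl | rfl
      · exact mem_lineThrough_iff.2 ⟨0, by module⟩
      · exact mem_lineThrough_iff.2 ⟨1, by module⟩
    have hLw'q : lineThrough c d = lineThrough w' q :=
      lineThrough_eq_of_mem (Ne.symm hqw') hw'LT hqLT
    have hmw'q : m ∈ lineThrough w' q := by
      rw [← hLw'q, ← hLeq]; exact hmL
    obtain ⟨tmm, hmm⟩ := mem_lineThrough_iff.1 hmw'q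
    rw [openSegment_eq_image'] at hwopen
    obtain ⟨tw, ⟨htw0, htw1⟩, hww⟩ := hwopen
    simp only [] at hww
    have hqww' : q - w' ≠ 0 := sub_ne_zero.2 hqw'
    have htwm : tw ≠ tmm := by
      intro h
      apply hwm
      rw [← hww, h]
      exact hmm.symm
    have hq1 : q = w' + (1:ℝ) • (q - w') := by module
    rcases lt_or_gt_of_ne htwm with hlt | hgt
    · -- w between w' and m
      have hwseg : w ∈ openSegment ℝ w' m := by
        rw [← hww, hmm]
        have h10 := param_mem_openSegment (x := w') (v := q - w') htw0 hlt
        have e0 : w' + (0:ℝ) • (q - w') = w' := by module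
        rw [e0] at h10
        exact h10
      have hnc : ¬ Collinear ℝ ({w', u, ℓ₂.a} : Set ℂ) :=
        hgp w' hw'P u huP ℓ₂.a ℓ₂.ha hw'_ne_u hw'_ne_a2 hu_ne_a2
      have hint := triangle_interior hnc hmopen hwseg
      have hsubE : ({w', u, ℓ₂.a} : Set ℂ) ⊆ convexHull ℝ ((endFinset T : Finset ℂ) : Set ℂ) := by
        intro z hz
        rcases hz with rfl | rfl | rfl
        · exact subset_convexHull ℝ _ (Finset.mem_coe.2 (mem_endFinset.2 ⟨ℓ, hℓl, hw'_ends⟩))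
        · exact subset_convexHull ℝ _ (Finset.mem_coe.2 huE)
        · exact ha2CH
      exact leaf_end_not_interior hgp hΔ T hℓ hw_ends
        (interior_mono (convexHull_min hsubE (convex_convexHull ℝ _)) hint)
    · -- w between m and q
      have hwseg : w ∈ openSegment ℝ m q := by
        rw [← hww, hmm]
        have h10 := param_mem_openSegment (x := w') (v := q - w') hgt htw1
        rw [← hq1] at h10
        exact h10
      have hq_ne_m : q ≠ m := by
        intro h
        have h15 : w' + (1:ℝ) • (q - w') = w' + tmm • (q - w') := by
          rw [← hq1, ← hmm]; exact h
        have h16 := param_inj hqww' h15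
        linarith
      have hnc : ¬ Collinear ℝ ({q, u, ℓ₂.a} : Set ℂ) := by
        intro hcol
        have hqUA : q ∈ lineThrough u ℓ₂.a := mem_lineThrough_of_collinear hu_ne_a2 hcol
        have hmUA : m ∈ lineThrough u ℓ₂.a := mem_lineThrough_iff.2 ⟨tm, hm⟩
        have h11 : lineThrough u ℓ₂.a = lineThrough q m :=
          lineThrough_eq_of_mem hq_ne_m hqUA hmUA
        have h12 : lineThrough c d = lineThrough q m :=
          lineThrough_eq_of_mem hq_ne_m hqLT (by rw [← hLeq]; exact hmL)
        have huL : u ∈ ℓ.carrier := by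
          rw [hLeq, h12, ← h11]
          exact mem_lineThrough_iff.2 ⟨0, by module⟩
        exact hends_ne u (Or.inl hu_ends) huL
      rw [openSegment_symm] at hwseg
      have hint := triangle_interior hnc hmopen hwseg
      have hsubE : ({q, u, ℓ₂.a} : Set ℂ) ⊆ convexHull ℝ ((endFinset T : Finset ℂ) : Set ℂ) := by
        intro z hz
        rcases hz with rfl | rfl | rfl
        · exact hqhull
        · exact subset_convexHull ℝ _ (Finset.mem_coe.2 huE)
        · exact ha2CH
      exact leaf_end_not_interior hgp hΔ T hℓ hw_ends
        (interior_mono (convexHull_min hsubE (convex_convexHull ℝ _)) hint)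
  -- q is in the core of ℓ but not of ℓ₁, hence ℓ₁ skewers ℓ
  have hqcore : q ∈ ℓ.core := by rw [hcoreq]; exact hqcd
  have htqρ : (1:ℝ) < tq * ρ := by
    have h17 : ρ⁻¹ * ρ = 1 := inv_mul_cancel₀ (ne_of_gt hρ0)
    nlinarith [mul_lt_mul_of_pos_right hsvtq hρ0]
  have hqvform : q = u + (tq * ρ) • (v - u) := by
    rw [hq, hpeq, mul_smul]
    module
  have hq_ncore1 : q ∉ ℓ₁.core := by
    intro hqc
    have hseg : q ∈ segment ℝ u v := by
      rcases huv with ⟨h1', h2'⟩ | ⟨h1', h2'⟩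
      · rw [h1', h2']; exact hqc
      · rw [h1', h2', segment_symm]; exact hqc
    rw [hqvform] at hseg
    have h13 := seg_param huvne hseg
    linarith [h13.2]
  have hq_car1 : q ∈ ℓ₁.carrier := by
    have h14 : q ∈ lineThrough u v := mem_lineThrough_iff.2 ⟨tq * ρ, hqvform⟩
    rcases huv with ⟨h1', h2'⟩ | ⟨h1', h2'⟩
    · show q ∈ lineThrough ℓ₁.a ℓ₁.b
      rw [← h1', ← h2']; exact h14
    · show q ∈ lineThrough ℓ₁.a ℓ₁.b
      rw [lineThrough_comm, ← h1', ← h2']; exact h14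
  have hskℓ : Skewers ℓ₁ ℓ :=
    ⟨carrier_ne_of_ne T h₁ hℓl (Ne.symm hne₁), q, hq_car1, hqL, hqcore, hq_ncore1⟩
  -- the link vertex of ℓ₁ ⊣ ℓ is also v
  have hq_ne_c : q ≠ c := by
    intro h
    have hcC : c ∈ lineThrough ℓ₁.a ℓ₁.b := by rw [← h]; exact hq_car1
    exact hgp c (hends_P c hc_ends) ℓ₁.a ℓ₁.ha ℓ₁.b ℓ₁.hb
      (fun h' => no_shared_end T hℓl h₁ hne₁ hc_ends (Or.inl h'))
      (fun h' => no_shared_end T hℓl h₁ hne₁ hc_ends (Or.inr h'))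
      ℓ₁.hab (collinear_of_mem_lineThrough hcC)
  have hq_ne_d : q ≠ d := by
    intro h
    have hdC : d ∈ lineThrough ℓ₁.a ℓ₁.b := by rw [← h]; exact hq_car1
    exact hgp d (hends_P d hd_ends) ℓ₁.a ℓ₁.ha ℓ₁.b ℓ₁.hb
      (fun h' => no_shared_end T hℓl h₁ hne₁ hd_ends (Or.inl h'))
      (fun h' => no_shared_end T hℓl h₁ hne₁ hd_ends (Or.inr h'))
      ℓ₁.hab (collinear_of_mem_lineThrough hdC)
  have hqopen_cd : q ∈ openSegment ℝ c d := mem_openSegment_of_ne' hqcd hq_ne_c hq_ne_d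
  have hvq : v ∈ openSegment ℝ u q := by
    rw [hqvform]; exact openSeg_beyond u v htqρ
  have hnc_ucd : ¬ Collinear ℝ ({u, c, d} : Set ℂ) := by
    intro hcol
    have huLT : u ∈ lineThrough c d := mem_lineThrough_of_collinear hcd hcol
    exact hends_ne u (Or.inl hu_ends) (by rw [hLeq]; exact huLT)
  have hvint : v ∈ interior (convexHull ℝ ({u, c, d} : Set ℂ)) :=
    triangle_interior hnc_ucd hqopen_cd hvq
  have hlv1ℓ : IsLinkVertex v ℓ₁ ℓ := by
    refine ⟨hlv12.1, ?_⟩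
    refine interior_mono (convexHull_mono ?_) hvint
    intro z hz
    rcases hz with rfl | rfl | rfl
    · rcases hu_ends with h | h <;> rw [h] <;> simp
    · rcases hc_ends with h | h <;> rw [h] <;> simp
    · rcases hd_ends with h | h <;> rw [h] <;> simp
  have hfinal := T.link_unique v ℓ₁ h₁ ℓ₂ h₂ ℓ₁ h₁ ℓ hℓl hsk hskℓ hlv12 hlv1ℓ
  exact hne₂ hfinal.2.symm
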